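/- Let F be a nonempty finite set of positive integers. With the greedy decomposition operators E_i, F ∈ S₂ if and only if E_{min F + 1}(F) = ∅. -/

import Mathlib

open Finset

/-- `F < G` for finite sets: every element of `F` is below every element of `G`. -/
def FinsetLT (F G : Finset ℕ) : Prop := ∀ x ∈ F, ∀ y ∈ G, x < y

/-- Membership in the Schreier family `S₁`: a finite set of positive integers
with `|F| ≤ min F` (the empty set belongs trivially). -/
def IsSchreier (F : Finset ℕ) : Prop := ∀ n ∈ F, 0 < n ∧ F.card ≤ n

/-- `F` is a union of at most `d` sets `F₁ < F₂ < ⋯`, each in the family `P`. -/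
def Combine (P : Finset ℕ → Prop) (d : ℕ) (F : Finset ℕ) : Prop :=
  ∃ L : List (Finset ℕ), L.length ≤ d ∧ L.Pairwise FinsetLT ∧
    (∀ G ∈ L, P G) ∧ L.foldr (· ∪ ·) ∅ = F

/-- Membership in `S₂`. -/
def MemS2 (F : Finset ℕ) : Prop :=
  F = ∅ ∨ ∃ h : F.Nonempty, Combine IsSchreier (F.min' h) F

/-- Membership in `S₃`. -/
def MemS3 (F : Finset ℕ) : Prop :=
  F = ∅ ∨ ∃ h : F.Nonempty, Combine MemS2 (F.min' h) F

/-- `F` is a maximal member of the family `P` (among sets of positive integers). -/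
def IsFull (P : Finset ℕ → Prop) (F : Finset ℕ) : Prop :=
  P F ∧ ∀ n : ℕ, 0 < n → n ∉ F → ¬ P (insert n F)

/-- `F ∈ full_{a,b}(P)`. -/
def FullAB (P : Finset ℕ → Prop) (a b : ℕ) (F : Finset ℕ) : Prop :=
  P F ∧ F ⊆ Finset.Icc a b ∧ a ∈ F ∧
    ∀ n ∈ Finset.Icc a b, n ∉ F → ¬ P (insert n F)

/-- The tower function `τ`. -/
def tau : ℕ → ℕ → ℕ
  | 0, a => a
  | i + 1, a => 2 ^ tau i a

/-- `E₁(F)`: `F` itself if `|F| ≤ min F`, otherwise the `min F` smallest elements of `F`. -/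
def E1 (F : Finset ℕ) : Finset ℕ :=
  if h : F.Nonempty then ((F.sort (· ≤ ·)).take (F.min' h)).toFinset else ∅

/-- Union of the first `i` greedy pieces. -/
def Eacc : ℕ → Finset ℕ → Finset ℕ
  | 0, _ => ∅
  | i + 1, F => Eacc i F ∪ E1 (F \ Eacc i F)

/-- The `i`-th greedy piece `E_i(F)` (for `i ≥ 1`). -/
def Epiece (i : ℕ) (F : Finset ℕ) : Finset ℕ := E1 (F \ Eacc (i - 1) F)

open Classical in
/-- `E₁*(F)`: `F` itself if `F ∈ S₂`, otherwise `E₁(F) ∪ ⋯ ∪ E_{min F}(F)`. -/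
noncomputable def E1star (F : Finset ℕ) : Finset ℕ :=
  if MemS2 F then F
  else if h : F.Nonempty then Eacc (F.min' h) F else ∅

/-- Union of the first `i` starred greedy pieces. -/
noncomputable def EaccStar : ℕ → Finset ℕ → Finset ℕ
  | 0, _ => ∅
  | i + 1, F => EaccStar i F ∪ E1star (F \ EaccStar i F)

/-- The `i`-th starred greedy piece `E_i*(F)` (for `i ≥ 1`). -/
noncomputable def EpieceStar (i : ℕ) (F : Finset ℕ) : Finset ℕ :=
  E1star (F \ EaccStar (i - 1) F)

lemma mem_foldr_union (L : List (Finset ℕ)) (x : ℕ) :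
    x ∈ L.foldr (· ∪ ·) ∅ ↔ ∃ G ∈ L, x ∈ G := by
  induction L with
  | nil => simp
  | cons a t ih => simp [ih]

lemma sorted_take_mem {l : List ℕ} (hl : l.Pairwise (· < ·)) (k x : ℕ) :
    x ∈ l.take k ↔ x ∈ l ∧ (l.filter (· < x)).length < k := by
  induction l generalizing k with
  | nil => simp
  | cons a t ih =>
    rcases k with _ | k
    · simp
    · rw [List.pairwise_cons] at hl
      by_cases hxa : x = a
      · subst hxa
        have h0 : t.filter (· < x) = [] := by
          apply List.filter_eq_nil_iff.mpr
          intro y hy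
          have := hl.1 y hy
          simp; omega
        simp [List.filter_cons, h0]
      · simp only [List.take_succ_cons, List.mem_cons, List.filter_cons, ih hl.2,
          List.mem_cons]
        by_cases hax : a < x
        · simp [hax, hxa]
        · have hxt : x ∉ t := fun hx => hax (hl.1 x hx)
          simp [hax, hxa, hxt]

lemma filter_sort_length (F : Finset ℕ) (p : ℕ → Prop) [DecidablePred p] :
    ((F.sort (· ≤ ·)).filter p).length = (F.filter p).card := by
  rw [((F.sort_perm_toList (· ≤ ·)).filter p).length_eq]
  have h2 : (↑(F.toList.filter p) : Multiset ℕ) = (F.filter p).val := by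
    rw [← Multiset.filter_coe, Finset.toList, Multiset.coe_toList, Finset.filter_val]
  simpa [Finset.card_def] using congrArg Multiset.card h2

lemma mem_E1 {F : Finset ℕ} (h : F.Nonempty) {x : ℕ} :
    x ∈ E1 F ↔ x ∈ F ∧ (F.filter (· < x)).card < F.min' h := by
  rw [E1, dif_pos h, List.mem_toFinset, sorted_take_mem (List.sortedLT_iff_pairwise.mp F.sortedLT_sort),
    Finset.mem_sort, filter_sort_length]

lemma E1_empty : E1 ∅ = ∅ := by simp [E1]

lemma E1_subset (F : Finset ℕ) : E1 F ⊆ F := by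
  intro x hx
  rcases F.eq_empty_or_nonempty with rfl | h
  · simpa [E1_empty] using hx
  · exact ((mem_E1 h).mp hx).1

lemma E1_card_le {F : Finset ℕ} (h : F.Nonempty) : (E1 F).card ≤ F.min' h := by
  rw [E1, dif_pos h]
  have hnd : ((F.sort (· ≤ ·)).take (F.min' h)).Nodup :=
    (F.sort_nodup (· ≤ ·)).sublist (List.take_sublist _ _)
  rw [List.toFinset_card_of_nodup hnd]
  simpa using List.length_take_le (F.min' h) (F.sort (· ≤ ·))

lemma min'_mem_E1 {F : Finset ℕ} (h : F.Nonempty) (hp : 0 < F.min' h) :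
    F.min' h ∈ E1 F := by
  rw [mem_E1 h]
  refine ⟨F.min'_mem h, ?_⟩
  have : F.filter (· < F.min' h) = ∅ := by
    apply Finset.filter_eq_empty_iff.mpr
    intro y hy
    exact not_lt.mpr (F.min'_le y hy)
  rw [this]
  simpa using hp

lemma E1_lt_compl {F : Finset ℕ} {x y : ℕ} (hx : x ∈ E1 F) (hy : y ∈ F)
    (hy' : y ∉ E1 F) : x < y := by
  have h : F.Nonempty := ⟨y, hy⟩
  rw [mem_E1 h] at hx hy'
  by_contra hc
  push_neg at hc
  apply hy'
  refine ⟨hy, lt_of_le_of_lt ?_ hx.2⟩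
  apply Finset.card_le_card
  intro z hz
  simp only [Finset.mem_filter] at hz ⊢
  exact ⟨hz.1, lt_of_lt_of_le hz.2 hc⟩

lemma subset_E1_of_closed {F S : Finset ℕ} (h : F.Nonempty) (hS : S ⊆ F)
    (hcl : ∀ x ∈ S, ∀ y ∈ F, y ≤ x → y ∈ S) (hcard : S.card ≤ F.min' h) :
    S ⊆ E1 F := by
  intro x hx
  rw [mem_E1 h]
  refine ⟨hS hx, ?_⟩
  have hsub : F.filter (· < x) ⊆ S.erase x := by
    intro y hy
    simp only [Finset.mem_filter] at hy
    exact Finset.mem_erase.mpr ⟨Nat.ne_of_lt hy.2, hcl x hx y hy.1 (le_of_lt hy.2)⟩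
  calc (F.filter (· < x)).card ≤ (S.erase x).card := Finset.card_le_card hsub
    _ < S.card := Finset.card_erase_lt_of_mem hx
    _ ≤ F.min' h := hcard

lemma E1_isSchreier {G : Finset ℕ} (hpos : ∀ n ∈ G, 0 < n) :
    ∀ n ∈ E1 G, 0 < n ∧ (E1 G).card ≤ n := by
  intro n hn
  have hnG : n ∈ G := E1_subset G hn
  have hne : G.Nonempty := ⟨n, hnG⟩
  exact ⟨hpos n hnG, le_trans (E1_card_le hne) (G.min'_le n hnG)⟩

lemma Eacc_subset (F : Finset ℕ) : ∀ i, Eacc i F ⊆ F := by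
  intro i
  induction i with
  | zero => simp [Eacc]
  | succ i ih =>
    rw [Eacc]
    exact Finset.union_subset ih (le_trans (E1_subset _) (Finset.sdiff_subset))

lemma Eacc_mono (F : Finset ℕ) {i j : ℕ} (hij : i ≤ j) : Eacc i F ⊆ Eacc j F := by
  induction j with
  | zero => simp [Nat.le_zero.mp hij]
  | succ j ih =>
    rcases Nat.lt_or_ge i (j+1) with hl | hg
    · exact le_trans (ih (Nat.lt_succ_iff.mp hl)) (by rw [Eacc]; exact Finset.subset_union_left)
    · have : i = j + 1 := le_antisymm hij hg
      subst this; rfl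

lemma mem_Eacc (F : Finset ℕ) (i x : ℕ) :
    x ∈ Eacc i F ↔ ∃ j < i, x ∈ E1 (F \ Eacc j F) := by
  induction i with
  | zero => simp [Eacc]
  | succ i ih =>
    rw [Eacc, Finset.mem_union, ih]
    constructor
    · rintro (⟨j, hj, hx⟩ | hx)
      · exact ⟨j, Nat.lt_succ_of_lt hj, hx⟩
      · exact ⟨i, Nat.lt_succ_self i, hx⟩
    · rintro ⟨j, hj, hx⟩
      rcases Nat.lt_succ_iff_lt_or_eq.mp hj with hj | rfl
      · exact Or.inl ⟨j, hj, hx⟩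
      · exact Or.inr hx

lemma piece_lt (F : Finset ℕ) {i j : ℕ} (hij : i < j) :
    ∀ x ∈ E1 (F \ Eacc i F), ∀ y ∈ E1 (F \ Eacc j F), x < y := by
  intro x hx y hy
  have hyF : y ∈ F \ Eacc j F := E1_subset _ hy
  rw [Finset.mem_sdiff] at hyF
  have hyi : y ∈ F \ Eacc i F := by
    rw [Finset.mem_sdiff]
    exact ⟨hyF.1, fun hc => hyF.2 (Eacc_mono F (le_of_lt hij) hc)⟩
  have hyni : y ∉ E1 (F \ Eacc i F) := by
    intro hc
    apply hyF.2
    apply Eacc_mono F hij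
    rw [Eacc, Finset.mem_union]
    exact Or.inr hc
  exact E1_lt_compl hx hyi hyni

theorem stmt12 (F : Finset ℕ) (hpos : ∀ n ∈ F, 0 < n) (h : F.Nonempty) :
    MemS2 F ↔ Epiece (F.min' h + 1) F = ∅ := by
  set m := F.min' h with hm
  have hEp : Epiece (m + 1) F = E1 (F \ Eacc m F) := by simp [Epiece]
  rw [hEp]
  constructor
  · rintro (rfl | ⟨h', L, hlen, hpw, hsch, hfold⟩)
    · exact absurd rfl h.ne_empty
    · have hLF : ∀ G ∈ L, G ⊆ F := by
        intro G hG x hx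
        rw [← hfold, mem_foldr_union]; exact ⟨G, hG, hx⟩
      have hidx : ∀ y ∈ F, ∃ j : ℕ, ∃ hj : j < L.length, y ∈ L[j] := by
        intro y hy
        rw [← hfold, mem_foldr_union] at hy
        obtain ⟨G, hG, hyG⟩ := hy
        obtain ⟨j, hj, rfl⟩ := List.mem_iff_getElem.mp hG
        exact ⟨j, hj, hyG⟩
      have hpw' := List.pairwise_iff_getElem.mp hpw
      have claim : ∀ i, ∀ j : ℕ, ∀ hj : j < L.length, j < i → L[j] ⊆ Eacc i F := by
        intro i
        induction i with
        | zero => intro j hj hji; exact absurd hji (Nat.not_lt_zero j)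
        | succ i ih =>
          intro j hj hji
          rcases Nat.lt_succ_iff_lt_or_eq.mp hji with hji | rfl
          · exact (ih j hj hji).trans (Eacc_mono F (Nat.le_succ i))
          · have hge : ∀ y ∈ F, y ∉ Eacc j F →
                ∀ j' : ℕ, ∀ hj' : j' < L.length, y ∈ L[j'] → j ≤ j' := by
              intro y hyF hyE j' hj' hyj'
              by_contra hc
              push_neg at hc
              exact hyE (ih j' hj' hc hyj')
            intro x hxG
            by_cases hxE : x ∈ Eacc j F
            · exact Eacc_mono F (Nat.le_succ j) hxE
            have hxF : x ∈ F := hLF _ (List.getElem_mem hj) hxG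
            have hxR : x ∈ F \ Eacc j F := Finset.mem_sdiff.mpr ⟨hxF, hxE⟩
            have hR : (F \ Eacc j F).Nonempty := ⟨x, hxR⟩
            have hμR : (F \ Eacc j F).min' hR ∈ F \ Eacc j F := Finset.min'_mem _ hR
            have hμF : (F \ Eacc j F).min' hR ∈ F := (Finset.mem_sdiff.mp hμR).1
            have hμE : (F \ Eacc j F).min' hR ∉ Eacc j F := (Finset.mem_sdiff.mp hμR).2
            obtain ⟨j', hj', hμj'⟩ := hidx _ hμF
            have hjj' : j ≤ j' := hge _ hμF hμE j' hj' hμj'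
            have hj'j : j' = j := by
              by_contra hne
              have hlt : j < j' := lt_of_le_of_ne hjj' (Ne.symm hne)
              have h1 := hpw' j j' hj hj' hlt x hxG _ hμj'
              have h2 := Finset.min'_le _ x hxR
              omega
            subst hj'j
            have hcard : L[j'].card ≤ (F \ Eacc j' F).min' hR :=
              (hsch _ (List.getElem_mem hj') _ hμj').2
            have hScl : ∀ x' ∈ (F \ Eacc j' F) ∩ L[j'], ∀ y ∈ F \ Eacc j' F,
                y ≤ x' → y ∈ (F \ Eacc j' F) ∩ L[j'] := by
              intro x' hx' y hy hyx'
              have hx'G : x' ∈ L[j'] := (Finset.mem_inter.mp hx').2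
              obtain ⟨j'', hj'', hyj''⟩ := hidx y (Finset.mem_sdiff.mp hy).1
              have hjj'' : j' ≤ j'' := hge y (Finset.mem_sdiff.mp hy).1
                (Finset.mem_sdiff.mp hy).2 j'' hj'' hyj''
              have hj''j : j'' = j' := by
                by_contra hne
                have hlt : j' < j'' := lt_of_le_of_ne hjj'' (Ne.symm hne)
                have := hpw' j' j'' hj' hj'' hlt x' hx'G y hyj''
                omega
              subst hj''j
              exact Finset.mem_inter.mpr ⟨hy, hyj''⟩
            have hsub : (F \ Eacc j' F) ∩ L[j'] ⊆ E1 (F \ Eacc j' F) :=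
              subset_E1_of_closed hR Finset.inter_subset_left hScl
                (le_trans (Finset.card_le_card Finset.inter_subset_right) hcard)
            have hxS : x ∈ (F \ Eacc j' F) ∩ L[j'] := Finset.mem_inter.mpr ⟨hxR, hxG⟩
            rw [Eacc]
            exact Finset.mem_union_right _ (hsub hxS)
      have hFE : F ⊆ Eacc m F := by
        intro x hx
        obtain ⟨j, hj, hxj⟩ := hidx x hx
        exact claim m j hj (lt_of_lt_of_le hj hlen) hxj
      rw [Finset.sdiff_eq_empty_iff_subset.mpr hFE, E1_empty]
  · intro hE
    have hRe : F \ Eacc m F = ∅ := by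
      by_contra hc
      have hR : (F \ Eacc m F).Nonempty := Finset.nonempty_iff_ne_empty.mpr hc
      have hp : 0 < (F \ Eacc m F).min' hR :=
        hpos _ ((Finset.mem_sdiff.mp ((F \ Eacc m F).min'_mem hR)).1)
      exact Finset.ne_empty_of_mem (min'_mem_E1 hR hp) hE
    have hFeq : Eacc m F = F :=
      le_antisymm (Eacc_subset F m) (Finset.sdiff_eq_empty_iff_subset.mp hRe)
    refine Or.inr ⟨h, (List.range m).map (fun i => E1 (F \ Eacc i F)), ?_, ?_, ?_, ?_⟩
    · simp; exact fun y hy => F.min'_le y hy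
    · rw [List.pairwise_map]
      exact (List.pairwise_lt_range : (List.range m).Pairwise (· < ·)).imp (fun hab => piece_lt F hab)
    · intro G hG
      simp only [List.mem_map, List.mem_range] at hG
      obtain ⟨i, hi, rfl⟩ := hG
      intro n hn
      exact E1_isSchreier (fun n hn' => hpos n (Finset.mem_sdiff.mp hn').1) n hn
    · ext x
      rw [mem_foldr_union]
      simp only [List.mem_map, List.mem_range]
      constructor
      · rintro ⟨G, ⟨i, hi, rfl⟩, hx⟩
        exact (Finset.mem_sdiff.mp (E1_subset _ hx)).1
      · intro hx
        obtain ⟨i, hi, hx'⟩ := (mem_Eacc F m x).mp (by rw [hFeq]; exact hx)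
        exact ⟨_, ⟨i, hi, rfl⟩, hx'⟩
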